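/- arXiv:1404.7221 — 2 statements merged into one kernel-verified Lean document; each statement's English description precedes it below -/
import Mathlib

section
/- The sequence (-1)^{n+1} (∫₀¹ B_{2n+1}(x) cot(πx) dx) · (2π)^{2n+1} / (2·(2n+1)!) converges to 1 as n → ∞, where B_{2n+1}(x) is the Bernoulli polynomial of degree 2n+1. -/
/-- Evaluation of the k-th Bernoulli polynomial at a real number. -/
noncomputable def bernoulliPolyEval (k : ℕ) (t : ℝ) : ℝ :=
  Polynomial.aeval t (Polynomial.bernoulli k)

open Real MeasureTheory Filter Set

lemma cot_id (m : ℕ) (hm : 1 ≤ m) (x : ℝ) (hx : Real.sin (Real.pi * x) ≠ 0) :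
    Real.sin (2 * Real.pi * m * x) * Real.cot (Real.pi * x)
      = 1 + Real.cos (2 * Real.pi * m * x)
        + 2 * ∑ j ∈ Finset.Ico 1 m, Real.cos (2 * Real.pi * j * x) := by
  induction m, hm using Nat.le_induction with
  | base =>
    simp only [Finset.Ico_self, Finset.sum_empty, mul_zero, add_zero, Nat.cast_one]
    rw [Real.cot_eq_cos_div_sin,
      show (2 : ℝ) * π * 1 * x = 2 * (π * x) by ring,
      Real.sin_two_mul, Real.cos_two_mul]
    field_simp
    ring
  | succ m hm ih =>
    have key : Real.sin (2 * π * (m + 1 : ℝ) * x) - Real.sin (2 * π * m * x)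
        = 2 * Real.sin (π * x) * Real.cos ((2 * (m:ℝ) + 1) * π * x) := by
      rw [Real.sin_sub_sin,
        show ((2 * π * ((m : ℝ) + 1) * x - 2 * π * m * x) / 2) = π * x by ring,
        show ((2 * π * ((m : ℝ) + 1) * x + 2 * π * m * x) / 2) = (2 * (m:ℝ) + 1) * π * x by ring]
    have key2 : Real.cos (2 * π * ((m : ℝ) + 1) * x) + Real.cos (2 * π * m * x)
        = 2 * Real.cos ((2 * (m:ℝ) + 1) * π * x) * Real.cos (π * x) := by
      rw [Real.cos_add_cos,
        show ((2 * π * ((m : ℝ) + 1) * x + 2 * π * m * x) / 2) = (2 * (m:ℝ) + 1) * π * x by ring,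
        show ((2 * π * ((m : ℝ) + 1) * x - 2 * π * m * x) / 2) = π * x by ring]
    rw [Finset.sum_Ico_succ_top hm]
    push_cast
    have e1 : Real.sin (2 * π * ((m : ℝ) + 1) * x)
        = Real.sin (2 * π * m * x) + 2 * Real.sin (π * x) * Real.cos ((2 * (m:ℝ) + 1) * π * x) := by
      linarith [key]
    rw [e1, add_mul, ih, Real.cot_eq_cos_div_sin]
    field_simp
    linear_combination (norm := ring_nf) (-1 : ℝ) * key2

lemma int_cos (j : ℕ) : ∫ x in (0:ℝ)..1, Real.cos (2 * Real.pi * j * x) = if j = 0 then 1 else 0 := by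
  rcases eq_or_ne j 0 with h | h
  · simp [h]
  · have hj0 : 0 < (j:ℝ) := by positivity
    have hc : (2 * Real.pi * (j:ℝ)) ≠ 0 := by
      have := Real.pi_pos
      positivity
    rw [if_neg h]
    have key := intervalIntegral.integral_comp_mul_left (a := (0:ℝ)) (b := 1) (f := Real.cos) hc
    simp only [mul_zero, mul_one] at key
    rw [key, _root_.integral_cos, Real.sin_zero, sub_zero,
      show (2 * Real.pi * (j:ℝ)) = ((2 * j : ℕ) : ℝ) * Real.pi by push_cast; ring,
      Real.sin_nat_mul_pi, smul_zero]

lemma int_g (m : ℕ) (hm : 1 ≤ m) :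
    ∫ x in (0:ℝ)..1, (1 + Real.cos (2 * Real.pi * m * x)
      + 2 * ∑ j ∈ Finset.Ico 1 m, Real.cos (2 * Real.pi * j * x)) = 1 := by
  have hci : ∀ j : ℕ, IntervalIntegrable (fun x => Real.cos (2 * Real.pi * j * x))
      MeasureTheory.volume 0 1 := fun j => (Real.continuous_cos.comp (by continuity)).intervalIntegrable 0 1
  have hsum : IntervalIntegrable (fun x => 2 * ∑ j ∈ Finset.Ico 1 m, Real.cos (2 * Real.pi * j * x))
      MeasureTheory.volume 0 1 := by
    apply IntervalIntegrable.const_mul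
    exact (continuous_finset_sum _ fun j _ => Real.continuous_cos.comp (by continuity)).intervalIntegrable 0 1
  rw [intervalIntegral.integral_add ((intervalIntegrable_const (c := (1:ℝ))).add (hci m)) hsum,
    intervalIntegral.integral_add (intervalIntegrable_const (c := (1:ℝ))) (hci m),
    intervalIntegral.integral_const, intervalIntegral.integral_const_mul,
    intervalIntegral.integral_finset_sum (fun j _ => hci j), int_cos m, if_neg (by omega)]
  rw [Finset.sum_congr rfl (fun j hj => by
    rw [int_cos j, if_neg (by rcases Finset.mem_Ico.mp hj with ⟨h1, _⟩; omega)])]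
  simp

lemma key_hasSum (n : ℕ) (hn : n ≠ 0) :
    HasSum (fun m : ℕ => 1 / (m:ℝ)^(2*n+1))
      ((-1 : ℝ)^(n+1) * (2*Real.pi)^(2*n+1) / 2 / (2*n+1).factorial *
        ∫ x in (0:ℝ)..1, bernoulliPolyEval (2*n+1) x * Real.cot (Real.pi * x)) := by
  set μ : Measure ℝ := volume.restrict (Set.Ioo 0 1) with hμ
  set F : ℕ → ℝ → ℝ := fun m x =>
    1 / (m:ℝ)^(2*n+1) * (Real.sin (2 * Real.pi * m * x) * Real.cot (Real.pi * x)) with hF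
  set G : ℕ → ℝ → ℝ := fun m x =>
    1 / (m:ℝ)^(2*n+1) * (1 + Real.cos (2 * Real.pi * m * x)
      + 2 * ∑ j ∈ Finset.Ico 1 m, Real.cos (2 * Real.pi * j * x)) with hG
  have hGcont : ∀ m, Continuous (G m) := by
    intro m
    apply Continuous.mul continuous_const
    apply Continuous.add (Continuous.add continuous_const ?_) (Continuous.mul continuous_const ?_)
    · exact Real.continuous_cos.comp (by continuity)
    · exact continuous_finset_sum _ fun j _ => Real.continuous_cos.comp (by continuity)
  have hsin : ∀ x ∈ Set.Ioo (0:ℝ) 1, Real.sin (Real.pi * x) ≠ 0 := by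
    intro x hx
    have := Real.sin_pos_of_pos_of_lt_pi (x := Real.pi * x)
      (by nlinarith [Real.pi_pos, hx.1]) (by nlinarith [Real.pi_pos, hx.1, hx.2])
    linarith
  have hFG : ∀ m, 1 ≤ m → ∀ x ∈ Set.Ioo (0:ℝ) 1, F m x = G m x := by
    intro m hm x hx
    simp only [hF, hG]
    rw [cot_id m hm x (hsin x hx)]
  have hae : ∀ m, 1 ≤ m → F m =ᵐ[μ] G m := by
    intro m hm
    rw [hμ]
    exact (ae_restrict_iff' measurableSet_Ioo).mpr (Filter.Eventually.of_forall
      fun x hx => hFG m hm x hx)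
  have hF0 : F 0 = fun _ => 0 := by
    funext x
    simp [hF]
  have hGint : ∀ m, Integrable (G m) μ := fun m =>
    ((hGcont m).integrableOn_Icc (a := (0:ℝ)) (b := 1)).mono_set Set.Ioo_subset_Icc_self
  have hInt : ∀ m, Integrable (F m) μ := by
    intro m
    rcases Nat.eq_zero_or_pos m with h | h
    · rw [h, hF0]
      exact integrable_zero _ _ _
    · exact (hGint m).congr (hae m h).symm
  -- value of the integrals
  have hIoc : μ = volume.restrict (Set.Ioc 0 1) :=
    Measure.restrict_congr_set Ioo_ae_eq_Ioc
  have hIntVal : ∀ m, ∫ x, F m x ∂μ = 1 / (m:ℝ)^(2*n+1) := by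
    intro m
    rcases Nat.eq_zero_or_pos m with h | h
    · rw [h, hF0]
      simp
    · rw [integral_congr_ae (hae m h), hG, hIoc]
      have : ∫ x in Set.Ioc (0:ℝ) 1, G m x = ∫ x in (0:ℝ)..1, G m x := by
        rw [intervalIntegral.integral_of_le zero_le_one]
      rw [show (fun x => 1 / (m:ℝ)^(2*n+1) * (1 + Real.cos (2 * Real.pi * m * x)
          + 2 * ∑ j ∈ Finset.Ico 1 m, Real.cos (2 * Real.pi * j * x))) = G m from rfl, this,
        hG]
      simp only []
      rw [intervalIntegral.integral_const_mul, int_g m h, mul_one]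
  -- summability of integrals of norms
  have hNormBound : ∀ m, (∫ x, ‖F m x‖ ∂μ) ≤ 2 / (m:ℝ)^2 := by
    intro m
    rcases Nat.eq_zero_or_pos m with h | h
    · rw [h, hF0]
      simp
    · have hmr : (1:ℝ) ≤ (m:ℝ) := by exact_mod_cast h
      have hpt : ∀ x, ‖G m x‖ ≤ 2 / (m:ℝ)^2 := by
        intro x
        have hb : |1 + Real.cos (2 * Real.pi * m * x)
            + 2 * ∑ j ∈ Finset.Ico 1 m, Real.cos (2 * Real.pi * j * x)| ≤ 2 * m := by
          have hs : |∑ j ∈ Finset.Ico 1 m, Real.cos (2 * Real.pi * j * x)| ≤ (m - 1 : ℕ) := by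
            calc |∑ j ∈ Finset.Ico 1 m, Real.cos (2 * Real.pi * j * x)|
                ≤ ∑ j ∈ Finset.Ico 1 m, |Real.cos (2 * Real.pi * j * x)| :=
                  Finset.abs_sum_le_sum_abs _ _
              _ ≤ ∑ j ∈ Finset.Ico 1 m, 1 := Finset.sum_le_sum fun j _ => Real.abs_cos_le_one _
              _ = ((m - 1 : ℕ) : ℝ) := by simp [Nat.card_Ico]
          have hc := Real.abs_cos_le_one (2 * Real.pi * m * x)
          have hcast : ((m - 1 : ℕ) : ℝ) = (m:ℝ) - 1 := by
            push_cast [h]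
            ring
          rw [hcast] at hs
          have := abs_add_le (1 + Real.cos (2 * Real.pi * m * x))
            (2 * ∑ j ∈ Finset.Ico 1 m, Real.cos (2 * Real.pi * j * x))
          have h1 := abs_add_le (1:ℝ) (Real.cos (2 * Real.pi * m * x))
          rw [abs_mul] at this
          simp only [abs_one] at h1
          calc |1 + Real.cos (2 * Real.pi * m * x)
              + 2 * ∑ j ∈ Finset.Ico 1 m, Real.cos (2 * Real.pi * j * x)|
              ≤ |1 + Real.cos (2 * Real.pi * m * x)|
                + |(2:ℝ)| * |∑ j ∈ Finset.Ico 1 m, Real.cos (2 * Real.pi * j * x)| := this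
            _ ≤ (1 + 1) + 2 * ((m:ℝ) - 1) := by
                rw [abs_two]
                linarith
            _ = 2 * m := by ring
        have hGval : ‖G m x‖ = 1 / (m:ℝ)^(2*n+1) * |1 + Real.cos (2 * Real.pi * m * x)
            + 2 * ∑ j ∈ Finset.Ico 1 m, Real.cos (2 * Real.pi * j * x)| := by
          rw [hG]
          simp only [Real.norm_eq_abs, abs_mul]
          congr 1
          rw [abs_of_nonneg]
          positivity
        rw [hGval]
        have hpow : (m:ℝ)^3 ≤ (m:ℝ)^(2*n+1) := by
          apply pow_le_pow_right₀ hmr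
          omega
        have hm0 : (0:ℝ) < (m:ℝ) := by linarith
        calc 1 / (m:ℝ)^(2*n+1) * |_ + _ + _| ≤ 1 / (m:ℝ)^(2*n+1) * (2*m) := by
              gcongr
          _ ≤ 2 / (m:ℝ)^2 := by
              rw [div_mul_eq_mul_div, div_le_div_iff₀ (by positivity) (by positivity)]
              calc 1 * (2 * (m:ℝ)) * (m:ℝ)^2 = 2 * (m:ℝ)^3 := by ring
                _ ≤ 2 * (m:ℝ)^(2*n+1) := by linarith
                _ = 2 * (m:ℝ)^(2*n+1) := rfl
      calc (∫ x, ‖F m x‖ ∂μ) = ∫ x, ‖G m x‖ ∂μ := integral_congr_ae ((hae m h).mono fun x hx => congrArg norm hx)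
        _ ≤ ∫ _x, 2 / (m:ℝ)^2 ∂μ := by
            apply integral_mono ((hInt m).norm.congr ((hae m h).mono fun x hx => congrArg norm hx)) (integrable_const _)
            exact hpt
        _ = 2 / (m:ℝ)^2 := by
            rw [integral_const]
            rw [hμ]
            simp [Real.volume_Ioo]
  have hNorm : Summable fun m => ∫ x, ‖F m x‖ ∂μ := by
    apply Summable.of_nonneg_of_le (fun m => integral_nonneg fun x => norm_nonneg _) hNormBound
    simpa [div_eq_mul_inv, mul_comm] using
      (summable_one_div_nat_pow (p := 2).mpr one_lt_two).mul_left (2:ℝ)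
  have hHS := MeasureTheory.hasSum_integral_of_summable_integral_norm hInt hNorm
  have hbp : ∀ x : ℝ, (Polynomial.map (algebraMap ℚ ℝ) (Polynomial.bernoulli (2*n+1))).eval x
      = bernoulliPolyEval (2*n+1) x := by
    intro x
    rw [bernoulliPolyEval, Polynomial.aeval_def, Polynomial.eval_map]
  have htsum : ∀ x ∈ Set.Ioo (0:ℝ) 1, (∑' m, F m x)
      = ((-1:ℝ)^(n+1) * (2*Real.pi)^(2*n+1) / 2 / (2*n+1).factorial)
        * (bernoulliPolyEval (2*n+1) x * Real.cot (Real.pi * x)) := by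
    intro x hx
    have hs := (hasSum_one_div_nat_pow_mul_sin (k := n) hn
      (Set.mem_Icc_of_Ioo hx)).mul_right (Real.cot (Real.pi * x))
    have e1 : (fun m : ℕ => F m x)
        = fun m : ℕ => 1 / (m:ℝ)^(2*n+1) * Real.sin (2 * Real.pi * m * x)
            * Real.cot (Real.pi * x) := by
      funext m
      simp only [hF]
      ring
    rw [e1, hs.tsum_eq, hbp]
    ring
  have hval : (∫ x, (∑' m, F m x) ∂μ)
      = ((-1:ℝ)^(n+1) * (2*Real.pi)^(2*n+1) / 2 / (2*n+1).factorial)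
        * ∫ x in (0:ℝ)..1, bernoulliPolyEval (2*n+1) x * Real.cot (Real.pi * x) := by
    rw [hμ]
    rw [setIntegral_congr_fun measurableSet_Ioo htsum, integral_const_mul]
    rw [Measure.restrict_congr_set Ioo_ae_eq_Ioc,
      ← intervalIntegral.integral_of_le (zero_le_one (α := ℝ))]
  rw [funext hIntVal, hval] at hHS
  exact hHS

lemma tail_bound (n : ℕ) (hn : 1 ≤ n) (m : ℕ) :
    1 / (((m+2:ℕ)):ℝ)^(2*n+1) ≤ (1/2:ℝ)^(2*n-1) * (1 / ((m:ℝ)+2)^2) := by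
  have hy : ((m+2:ℕ):ℝ) = (m:ℝ) + 2 := by push_cast; ring
  set y : ℝ := (m:ℝ) + 2 with hyd
  have hy2 : (2:ℝ) ≤ y := by rw [hyd]; linarith [Nat.cast_nonneg (α:=ℝ) m]
  have hy0 : (0:ℝ) < y := by linarith
  rw [hy, show 2*n+1 = (2*n-1)+2 by omega, pow_add]
  have h1 : (2:ℝ)^(2*n-1) * y^2 ≤ y^(2*n-1) * y^2 := by
    gcongr
  calc 1/(y^(2*n-1)*y^2) ≤ 1/((2:ℝ)^(2*n-1)*y^2) :=
        one_div_le_one_div_of_le (by positivity) h1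
    _ = (1/2:ℝ)^(2*n-1) * (1/y^2) := by
        rw [div_pow, one_pow]
        field_simp
set_option maxHeartbeats 1000000 in
lemma tendsto_tsum_pow :
    Tendsto (fun n : ℕ => ∑' m : ℕ, 1/(m:ℝ)^(2*n+1)) atTop (nhds 1) := by
  have hC_sum : Summable (fun m : ℕ => 1/((m:ℝ)+2)^2) := by
    have h0 : Summable (fun m : ℕ => 1/(m:ℝ)^2) := summable_one_div_nat_pow.mpr one_lt_two
    have := (summable_nat_add_iff (f := fun m : ℕ => 1/(m:ℝ)^2) 2).mpr h0
    apply this.congr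
    intro m
    push_cast
    ring
  set C : ℝ := ∑' m : ℕ, 1/((m:ℝ)+2)^2 with hC
  have hsm : ∀ n : ℕ, 1 ≤ n → Summable (fun m : ℕ => 1/(m:ℝ)^(2*n+1)) :=
    fun n hn => summable_one_div_nat_pow.mpr (by omega)
  have hlow : ∀ n : ℕ, 1 ≤ n → (1:ℝ) ≤ ∑' m : ℕ, 1/(m:ℝ)^(2*n+1) := by
    intro n hn
    have := Summable.le_tsum (hsm n hn) 1 (fun m _ => by positivity)
    simpa using this
  have hsplit : ∀ n : ℕ, 1 ≤ n → (∑' m : ℕ, 1/(m:ℝ)^(2*n+1))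
      = 1 + ∑' m : ℕ, 1/(((m+2:ℕ)):ℝ)^(2*n+1) := by
    intro n hn
    have h := Summable.sum_add_tsum_nat_add 2 (hsm n hn)
    rw [← h]
    congr 1
    rw [Finset.sum_range_succ, Finset.sum_range_one]
    norm_num
  have htail_sm : ∀ n : ℕ, 1 ≤ n → Summable (fun m : ℕ => 1/(((m+2:ℕ)):ℝ)^(2*n+1)) :=
    fun n hn => ((summable_nat_add_iff 2).mpr (hsm n hn))
  have hup : ∀ n : ℕ, 1 ≤ n → (∑' m : ℕ, 1/(m:ℝ)^(2*n+1)) ≤ 1 + (1/2:ℝ)^(2*n-1) * C := by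
    intro n hn
    rw [hsplit n hn]
    gcongr 1 + ?_
    calc (∑' m : ℕ, 1/(((m+2:ℕ)):ℝ)^(2*n+1))
        ≤ ∑' m : ℕ, (1/2:ℝ)^(2*n-1) * (1 / ((m:ℝ)+2)^2) :=
          Summable.tsum_le_tsum (tail_bound n hn) (htail_sm n hn) (hC_sum.mul_left _)
      _ = (1/2:ℝ)^(2*n-1) * C := tsum_mul_left
  have htop : Tendsto (fun n : ℕ => 1 + (1/2:ℝ)^(2*n-1) * C) atTop (nhds 1) := by
    have h2 : Tendsto (fun n : ℕ => ((1:ℝ)/2)^(2*n-1)) atTop (nhds 0) :=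
      (tendsto_pow_atTop_nhds_zero_of_lt_one (by norm_num) (by norm_num)).comp
        (tendsto_atTop_mono (fun n => by omega : ∀ n : ℕ, n ≤ 2*n-1) tendsto_id)
    have := (h2.mul_const C).const_add 1
    simpa using this
  apply tendsto_of_tendsto_of_tendsto_of_le_of_le' (tendsto_const_nhds (x := (1:ℝ))) htop
  · filter_upwards [eventually_ge_atTop 1] with n hn using hlow n hn
  · filter_upwards [eventually_ge_atTop 1] with n hn using hup n hn

theorem stmt10 :
    Filter.Tendsto
      (fun n : ℕ => (-1)^(n+1)
        * (∫ x in (0:ℝ)..1, bernoulliPolyEval (2*n+1) x * Real.cot (Real.pi * x))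
        * (2*Real.pi)^(2*n+1) / (2 * Nat.factorial (2*n+1)))
      Filter.atTop (nhds 1) := by
  have h1 : (fun n : ℕ => ∑' m : ℕ, 1/(m:ℝ)^(2*n+1)) =ᶠ[Filter.atTop]
      (fun n : ℕ => (-1)^(n+1)
        * (∫ x in (0:ℝ)..1, bernoulliPolyEval (2*n+1) x * Real.cot (Real.pi * x))
        * (2*Real.pi)^(2*n+1) / (2 * Nat.factorial (2*n+1))) := by
    filter_upwards [Filter.eventually_ge_atTop 1] with n hn
    rw [(key_hasSum n (by omega)).tsum_eq]
    have hfac : ((2*n+1).factorial : ℝ) ≠ 0 := Nat.cast_ne_zero.mpr (Nat.factorial_ne_zero _)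
    field_simp
  exact Filter.Tendsto.congr' h1 tendsto_tsum_pow
end

section
/- Define ρ(s) = 1/η(s) - 1 with η the Dirichlet eta function, and for n ≥ 1 let ζ^l(2n+1) and ζ^r(2n+1) be the real numbers defined by requiring ρ associated to them (via ζ(s) = 1/((1-2^{1-s})(1+ρ(s)))) to equal ρ(2n)/2 and 2ρ(2n+2) respectively. Then ζ^l(2n+1) > ζ^r(2n+1) > 1 for every integer n ≥ 1. -/
open Filter Finset Real Topology

/-- The Dirichlet eta function of a real argument s, as an alternating series. -/
noncomputable def realEta (s : ℝ) : ℝ := ∑' n : ℕ, (-1)^n / (n+1 : ℝ)^s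

/-- ρ(s) = 1/η(s) - 1. -/
noncomputable def rho (s : ℝ) : ℝ := 1 / realEta s - 1

/-- The left approximation ζ^l(2n+1) obtained from ρ(2n)/2. -/
noncomputable def zetaL (n : ℕ) : ℝ :=
  1 / ((1 - 2^(-(2*n : ℝ))) * (1 + rho (2*n) / 2))

/-- The right approximation ζ^r(2n+1) obtained from 2ρ(2n+2). -/
noncomputable def zetaR (n : ℕ) : ℝ :=
  1 / ((1 - 2^(-(2*n : ℝ))) * (1 + 2 * rho (2*n+2)))

noncomputable def gterm (m : ℕ) (i : ℕ) : ℝ := 1 / ((i:ℝ)+1)^m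

lemma gterm_antitone (m : ℕ) : Antitone (gterm m) := by
  intro i j hij
  unfold gterm
  have h1 : ((i:ℝ)+1) ≤ (j:ℝ)+1 := by exact_mod_cast Nat.succ_le_succ hij
  have h0 : (0:ℝ) < (i:ℝ)+1 := by positivity
  exact one_div_le_one_div_of_le (by positivity) (pow_le_pow_left₀ h0.le h1 m)

lemma summable_gterm (m : ℕ) (hm : 2 ≤ m) : Summable (gterm m) := by
  have h : Summable (fun n : ℕ => 1/(n:ℝ)^m) := Real.summable_one_div_nat_pow.mpr (by omega)
  have h2 := (summable_nat_add_iff 1).mpr h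
  refine h2.congr fun i => ?_
  unfold gterm
  push_cast
  ring_nf

lemma summable_alt (m : ℕ) (hm : 2 ≤ m) :
    Summable (fun i : ℕ => (-1:ℝ)^i * gterm m i) := by
  refine Summable.of_norm ?_
  refine (summable_gterm m hm).congr fun i => ?_
  have : (0:ℝ) ≤ gterm m i := by unfold gterm; positivity
  simp [norm_mul, abs_of_nonneg this]

lemma eta_eq (m : ℕ) : realEta (m:ℝ) = ∑' i, (-1:ℝ)^i * gterm m i := by
  unfold realEta gterm
  refine tsum_congr fun i => ?_
  rw [Real.rpow_natCast, div_eq_mul_one_div]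

lemma tendsto_eta (m : ℕ) (hm : 2 ≤ m) :
    Tendsto (fun N => ∑ i ∈ range N, (-1:ℝ)^i * gterm m i) atTop (𝓝 (realEta (m:ℝ))) := by
  rw [eta_eq]
  exact (summable_alt m hm).hasSum.tendsto_sum_nat

lemma eta_lb1 (m : ℕ) (hm : 2 ≤ m) : 1 - 1/2^m ≤ realEta (m:ℝ) := by
  have h := (gterm_antitone m).alternating_series_le_tendsto (tendsto_eta m hm) 1
  have e : ∑ i ∈ range (2*1), (-1:ℝ)^i * gterm m i = 1 - 1/2^m := by
    simp [Finset.sum_range_succ, gterm]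
    norm_num
    ring
  linarith [e ▸ h]

lemma eta_ub1 (m : ℕ) (hm : 2 ≤ m) : realEta (m:ℝ) ≤ 1 - 1/2^m + 1/3^m := by
  have h := (gterm_antitone m).tendsto_le_alternating_series (tendsto_eta m hm) 1
  have e : ∑ i ∈ range (2*1+1), (-1:ℝ)^i * gterm m i = 1 - 1/2^m + 1/3^m := by
    simp [Finset.sum_range_succ, gterm]
    norm_num
    ring
  linarith [e ▸ h]

lemma eta_lb2 (m : ℕ) (hm : 2 ≤ m) :
    1 - 1/2^m + 1/3^m - 1/4^m ≤ realEta (m:ℝ) := by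
  have h := (gterm_antitone m).alternating_series_le_tendsto (tendsto_eta m hm) 2
  have e : ∑ i ∈ range (2*2), (-1:ℝ)^i * gterm m i = 1 - 1/2^m + 1/3^m - 1/4^m := by
    simp [Finset.sum_range_succ, gterm]
    norm_num
    ring
  linarith [e ▸ h]

lemma realEta_eq_of_hasSum (m : ℕ) (hm : 1 ≤ m) (L : ℝ)
    (h : HasSum (fun n : ℕ => 1/(n:ℝ)^m) L) :
    realEta (m:ℝ) = (1 - 2/2^m) * L := by
  set f : ℕ → ℝ := fun n => 1/(n:ℝ)^m with hf
  have h0 : f 0 = 0 := by simp [hf, zero_pow (by omega : m ≠ 0)]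
  have heven : HasSum (fun j : ℕ => f (2*j)) (L/2^m) := by
    have h' := h.mul_left ((1:ℝ)/2^m)
    have hfun : (fun j : ℕ => f (2*j)) = fun j => (1/2^m) * f j := by
      funext j
      simp only [hf]
      push_cast
      rw [mul_pow, one_div, one_div, one_div, mul_inv]
    rw [hfun]
    convert h' using 1
    · rfl
    ring
  have hoddS : Summable (fun j : ℕ => f (2*j+1)) := by
    have hinj : Function.Injective (fun j : ℕ => 2*j+1) := by
      intro a b hab; simp only at hab; omega
    exact h.summable.comp_injective hinj
  obtain ⟨S, hS⟩ := hoddS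
  have htot := heven.even_add_odd hS
  have hLS : S = L - L/2^m := by
    have := htot.unique h
    linarith
  rw [hLS] at hS
  have hshift : HasSum (fun j : ℕ => f (2*j+2)) (L/2^m) := by
    have h1 := (hasSum_nat_add_iff (f := fun j : ℕ => f (2*j)) 1
      (g := L/2^m)).mpr (by simpa [h0] using heven)
    have e : (fun j : ℕ => f (2*j+2)) = fun n : ℕ => f (2*(n+1)) := by
      funext j; congr 1; try ring
    rw [e]
    exact h1
  set F : ℕ → ℝ := fun i => (-1:ℝ)^i / ((i:ℝ)+1)^(m:ℝ) with hF
  have hFeq : ∀ i, F i = (-1:ℝ)^i * f (i+1) := by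
    intro i
    simp only [hF, hf]
    rw [Real.rpow_natCast]
    push_cast
    rw [div_eq_mul_one_div]
  have hFe : HasSum (fun k : ℕ => F (2*k)) (L - L/2^m) := by
    have e : (fun k : ℕ => F (2*k)) = fun k => f (2*k+1) := by
      funext k; rw [hFeq]; simp [pow_mul]
    rw [e]; exact hS
  have hFo : HasSum (fun k : ℕ => F (2*k+1)) (-(L/2^m)) := by
    have e : (fun k : ℕ => F (2*k+1)) = fun k => -(f (2*k+2)) := by
      funext k; rw [hFeq]; simp [pow_succ, pow_mul]
    rw [e]; exact hshift.neg
  have htotF := hFe.even_add_odd hFo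
  have e : realEta (m:ℝ) = (L - L/2^m) + -(L/2^m) := htotF.tsum_eq
  rw [e]
  ring

lemma main_ineq (q x y : ℝ) (hq0 : 0 < q) (hq1 : q ≤ 1/4)
    (hx0 : 1/2 ≤ x) (hy1 : y ≤ 1) (hyq : 1 - q/4 ≤ y)
    (hkey : (1-x) + 3*((1-x)*(1-y)) < 4*(1-y)) :
    1/((1-q)*(1+(1/x-1)/2)) > 1/((1-q)*(1+2*(1/y-1))) ∧
    1/((1-q)*(1+2*(1/y-1))) > 1 := by
  have hy0 : 0 < y := by linarith
  have hx0' : 0 < x := by linarith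
  have hc : 0 < 1 - q := by linarith
  have h2y : 0 < 2 - y := by linarith
  have hDL : (1-q)*(1+(1/x-1)/2) = (1-q)*(x+1)/(2*x) := by
    field_simp
    ring
  have hDR : (1-q)*(1+2*(1/y-1)) = (1-q)*(2-y)/y := by
    field_simp
    ring_nf
  have hDLpos : 0 < (1-q)*(x+1)/(2*x) := by positivity
  have hDRpos : 0 < (1-q)*(2-y)/y := by positivity
  constructor
  · rw [hDL, hDR, gt_iff_lt]
    apply one_div_lt_one_div_of_lt hDLpos
    rw [div_lt_div_iff₀ (by positivity) (by positivity)]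
    nlinarith [hkey, hc, hx0', hy0]
  · rw [hDR, gt_iff_lt, lt_div_iff₀ hDRpos, one_mul]
    rw [div_lt_one hy0]
    nlinarith [mul_le_of_le_one_right hq0.le hy1]

lemma pow63 (m : ℕ) (hm : 4 ≤ m) : (63:ℝ) * 3^m < 20 * 4^m := by
  have h : ∀ k : ℕ, 63 * 3^(k+4) < 20 * 4^(k+4) := by
    intro k
    induction k with
    | zero => norm_num
    | succ k ih =>
      have e1 : 63 * 3^(k+1+4) = 3 * (63 * 3^(k+4)) := by ring
      rw [e1]
      calc 3 * (63 * 3^(k+4)) < 3 * (20 * 4^(k+4)) := by omega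
        _ ≤ 4 * (20 * 4^(k+4)) := by omega
        _ = 20 * 4^(k+1+4) := by ring
  have hk : m = (m-4) + 4 := by omega
  rw [hk]
  exact_mod_cast h (m-4)

lemma numeric_gen (n : ℕ) (hn : 2 ≤ n) :
    (1/(2:ℝ)^(2*n) - 1/3^(2*n) + 1/4^(2*n)) + 3*((1/(2:ℝ)^(2*n))*(1/2^(2*n+2)))
      < 4*(1/(2:ℝ)^(2*n+2) - 1/3^(2*n+2)) := by
  have h63 := pow63 (2*n) (by omega)
  have h4 : (4:ℝ)^(2*n) = 2^(2*n) * 2^(2*n) := by rw [← mul_pow]; norm_num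
  rw [pow_add, pow_add, h4]
  have hE : (0:ℝ) < 2^(2*n) := by positivity
  have hF : (0:ℝ) < 3^(2*n) := by positivity
  rw [h4] at h63
  generalize (2:ℝ)^(2*n) = E at *
  generalize (3:ℝ)^(2*n) = F at *
  norm_num
  have h63' : 63 * (E⁻¹*E⁻¹) < 20 * F⁻¹ := by
    rw [show (63:ℝ)*(E⁻¹*E⁻¹) = 63/(E*E) by field_simp,
      show (20:ℝ)*F⁻¹ = 20/F by rw [div_eq_mul_inv],
      div_lt_div_iff₀ (by positivity) (by positivity)]
    nlinarith [h63]
  nlinarith [h63']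

lemma one_div_pow_le_32 (m : ℕ) : 1/(3:ℝ)^m ≤ 1/(2:ℝ)^m :=
  one_div_le_one_div_of_le (by positivity) (pow_le_pow_left₀ (by norm_num) (by norm_num) m)

lemma one_div_pow_le_43 (m : ℕ) : 1/(4:ℝ)^m ≤ 1/(3:ℝ)^m :=
  one_div_le_one_div_of_le (by positivity) (pow_le_pow_left₀ (by norm_num) (by norm_num) m)

theorem stmt18 (n : ℕ) (hn : 1 ≤ n) : zetaL n > zetaR n ∧ zetaR n > 1 := by
  have hm2 : 2 ≤ 2*n := by omega
  have ht2 : 2 ≤ 2*n+2 := by omega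
  have hcast1 : (2*(n:ℝ)) = ((2*n:ℕ):ℝ) := by push_cast; ring
  have hcast2 : (2*(n:ℝ)+2) = ((2*n+2:ℕ):ℝ) := by push_cast; ring
  have h2pow : (4:ℝ) ≤ 2^(2*n) := by
    calc (4:ℝ) = 2^2 := by norm_num
    _ ≤ 2^(2*n) := pow_le_pow_right₀ (by norm_num) hm2
  have hq0 : (0:ℝ) < 1/2^(2*n) := by positivity
  have hq1 : (1:ℝ)/2^(2*n) ≤ 1/4 := one_div_le_one_div_of_le (by norm_num) h2pow
  have hxlb1 := eta_lb1 (2*n) hm2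
  have hxub := eta_ub1 (2*n) hm2
  have hxlb2 := eta_lb2 (2*n) hm2
  have hylb := eta_lb1 (2*n+2) ht2
  have hyub := eta_ub1 (2*n+2) ht2
  have h32m := one_div_pow_le_32 (2*n)
  have h32t := one_div_pow_le_32 (2*n+2)
  have h43m := one_div_pow_le_43 (2*n)
  have hx1 : realEta ((2*n:ℕ):ℝ) ≤ 1 := by linarith
  have hy1 : realEta ((2*n+2:ℕ):ℝ) ≤ 1 := by linarith
  have hx12 : 1/2 ≤ realEta ((2*n:ℕ):ℝ) := by linarith
  have hpow_t : (1:ℝ)/2^(2*n+2) = (1/2^(2*n))/4 := by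
    rw [pow_add, div_mul_eq_div_div]
    norm_num
  have hyq : 1 - (1/2^(2*n))/4 ≤ realEta ((2*n+2:ℕ):ℝ) := by
    rw [← hpow_t]; linarith
  have hkey : (1 - realEta ((2*n:ℕ):ℝ))
      + 3*((1 - realEta ((2*n:ℕ):ℝ))*(1 - realEta ((2*n+2:ℕ):ℝ)))
      < 4*(1 - realEta ((2*n+2:ℕ):ℝ)) := by
    rcases Nat.lt_or_ge n 2 with h1 | h2
    · -- n = 1 : use exact values
      have hn1 : n = 1 := by omega
      subst hn1
      have hx2 := realEta_eq_of_hasSum 2 (by norm_num) _ hasSum_zeta_two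
      have hy4 := realEta_eq_of_hasSum 4 (by norm_num) _ hasSum_zeta_four
      norm_num at hx2 hy4 ⊢
      rw [hx2, hy4]
      have hpl : (3.141592:ℝ) < π := Real.pi_gt_d6
      have hpu : π < (3.141593:ℝ) := Real.pi_lt_d6
      have hu1 : (9.86960 : ℝ) < π^2 := by nlinarith
      have hu2 : π^2 < (9.86961 : ℝ) := by nlinarith
      nlinarith [hu1, hu2, sq_nonneg (π^2 - 9.8696)]
    · -- n ≥ 2 : use series bounds
      have hnum := numeric_gen n h2
      have hab : (1 - realEta ((2*n:ℕ):ℝ))*(1 - realEta ((2*n+2:ℕ):ℝ))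
          ≤ (1/2^(2*n))*(1/2^(2*n+2)) := by
        apply mul_le_mul (by linarith) (by linarith) (by linarith) (le_of_lt hq0)
      linarith
  have main := main_ineq (1/2^(2*n)) (realEta ((2*n:ℕ):ℝ)) (realEta ((2*n+2:ℕ):ℝ))
    hq0 hq1 hx12 hy1 hyq hkey
  have hqe : (2:ℝ)^(-(((2*n:ℕ)):ℝ)) = 1/2^(2*n) := by
    rw [Real.rpow_neg (by norm_num), Real.rpow_natCast, one_div]
  unfold zetaL zetaR rho
  rw [hcast1, show ((2*n:ℕ):ℝ) + 2 = ((2*n+2:ℕ):ℝ) by push_cast; ring, hqe]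
  exact main
end
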